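/- Let a₁,...,a_m ∈ ℝⁿ satisfy ‖aᵢ‖₂ ≤ 1 and be C-isotropic, let bᵢ ∈ {−1,1}, and let ‖x‖₂ ≤ R. If for each sample in the set S = {k : 1 − bₖaₖᵀx ∈ [−δ,δ]} the quantized gradient estimator may deviate from the true subgradient by a vector of norm at most 1, while for samples outside S the deviation of the conditional mean is at most ε, then the bias of the overall estimator satisfies ‖E[g] − ∇f(x)‖₂ ≤ ε + R²/(mC⁻¹(1−δ)²) — precisely, ≤ ε + |S|/m with |S| ≤ C‖x‖₂²/(1−δ)². -/

import Mathlib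

/-- Bias bound for quantized SVM SGD under `C`-isotropy: with `‖aₖ‖₂ ≤ 1`,
`bₖ ∈ {−1,1}`, `‖x‖₂² ≤ R²`, `S = {k : 1 − bₖaₖᵀx ∈ [−δ,δ]}`, per-sample
conditional-mean deviation at most `ε` outside `S` and at most `1` on `S`,
the bias of the averaged estimator is at most `ε + |S|/m`, where
`|S|(1−δ)² ≤ C‖x‖₂²`. -/
theorem stmt19 {n m : ℕ} (hm : 0 < m) (a : Fin m → Fin n → ℝ)
    (bl : Fin m → ℝ) (x : Fin n → ℝ) (C R δ ε : ℝ)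
    (hδ : 0 ≤ δ) (hδ1 : δ < 1) (hε : 0 ≤ ε) (hC : 0 ≤ C)
    (ha : ∀ k, ∑ i, (a k i) ^ 2 ≤ 1)
    (hbl : ∀ k, bl k = 1 ∨ bl k = -1)
    (hiso : ∀ y : Fin n → ℝ,
      ∑ k, (∑ i, a k i * y i) ^ 2 ≤ C * ∑ i, (y i) ^ 2)
    (hx : ∑ i, (x i) ^ 2 ≤ R ^ 2)
    (G E : Fin m → Fin n → ℝ)
    (S : Finset (Fin m))
    (hS : S = Finset.univ.filter
      (fun k => |1 - bl k * ∑ i, a k i * x i| ≤ δ))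
    (hout : ∀ k ∉ S, ∑ i, (E k i - G k i) ^ 2 ≤ ε ^ 2)
    (hin : ∀ k ∈ S, ∑ i, (E k i - G k i) ^ 2 ≤ 1) :
    Real.sqrt (∑ i, ((1 / m : ℝ) * ∑ k, E k i
        - (1 / m : ℝ) * ∑ k, G k i) ^ 2)
      ≤ ε + (S.card : ℝ) / m ∧
    (S.card : ℝ) * (1 - δ) ^ 2 ≤ C * ∑ i, (x i) ^ 2 := by
  have hm' : (0:ℝ) < m := by exact_mod_cast hm
  constructor
  · -- work in EuclideanSpace
    set v : Fin m → EuclideanSpace ℝ (Fin n) := fun k => WithLp.toLp 2 (fun i => E k i - G k i) with hv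
    have hnorm : ∀ k, ‖v k‖ = Real.sqrt (∑ i, (E k i - G k i) ^ 2) := by
      intro k
      rw [EuclideanSpace.norm_eq]
      congr 1; apply Finset.sum_congr rfl; intro i _
      rw [Real.norm_eq_abs, sq_abs]
    have hbound : ∀ k, ‖v k‖ ≤ if k ∈ S then 1 else ε := by
      intro k
      rw [hnorm]
      by_cases hk : k ∈ S
      · simp only [hk, if_true]
        calc Real.sqrt (∑ i, (E k i - G k i) ^ 2) ≤ Real.sqrt 1 :=
              Real.sqrt_le_sqrt (hin k hk)
          _ = 1 := Real.sqrt_one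
      · simp only [hk, if_false]
        calc Real.sqrt (∑ i, (E k i - G k i) ^ 2) ≤ Real.sqrt (ε ^ 2) :=
              Real.sqrt_le_sqrt (hout k hk)
          _ = ε := Real.sqrt_sq hε
    have hsum : ‖∑ k, v k‖ ≤ (S.card : ℝ) + m * ε := by
      calc ‖∑ k, v k‖ ≤ ∑ k, ‖v k‖ := norm_sum_le _ _
        _ ≤ ∑ k : Fin m, (if k ∈ S then 1 else ε) :=
            Finset.sum_le_sum fun k _ => hbound k
        _ ≤ ∑ k : Fin m, ((if k ∈ S then (1:ℝ) else 0) + ε) := by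
            apply Finset.sum_le_sum; intro k _
            by_cases hk : k ∈ S <;> simp [hk, hε]
        _ = (S.card : ℝ) + m * ε := by
            rw [Finset.sum_add_distrib, Finset.sum_const, Finset.sum_ite_mem]
            simp [mul_comm]
    have key : Real.sqrt (∑ i, ((1 / m : ℝ) * ∑ k, E k i
        - (1 / m : ℝ) * ∑ k, G k i) ^ 2) = (1/m) * ‖∑ k, v k‖ := by
      have hne : ‖∑ k, v k‖ = Real.sqrt (∑ i, (∑ k, (E k i - G k i)) ^ 2) := by
        rw [EuclideanSpace.norm_eq]
        congr 1; apply Finset.sum_congr rfl; intro i _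
        rw [Real.norm_eq_abs, sq_abs]
        have h : (∑ k, v k) i = ∑ k, (E k i - G k i) := by
          rw [WithLp.ofLp_sum, Finset.sum_apply]
        rw [h]
      have h1 : ∑ i, ((1 / m : ℝ) * ∑ k, E k i - (1 / m : ℝ) * ∑ k, G k i) ^ 2
          = (1/m:ℝ)^2 * ∑ i, (∑ k, (E k i - G k i)) ^ 2 := by
        rw [Finset.mul_sum]
        apply Finset.sum_congr rfl; intro i _
        rw [Finset.sum_sub_distrib]; ring
      rw [h1, Real.sqrt_mul (sq_nonneg _), Real.sqrt_sq (by positivity), ← hne]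
    rw [key]
    calc (1/m) * ‖∑ k, v k‖ ≤ (1/m) * ((S.card : ℝ) + m * ε) := by
          apply mul_le_mul_of_nonneg_left hsum (by positivity)
      _ = ε + (S.card : ℝ) / m := by field_simp; ring
  · -- cardinality bound
    have hterm : ∀ k ∈ S, (1 - δ) ^ 2 ≤ (∑ i, a k i * x i) ^ 2 := by
      intro k hk
      rw [hS, Finset.mem_filter] at hk
      have habs := hk.2
      set t := ∑ i, a k i * x i
      have h1 : bl k * t ≥ 1 - δ := by
        have := abs_le.mp habs
        linarith [this.1, this.2]
      have h2 : (bl k * t) ^ 2 ≤ t ^ 2 := by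
        rcases hbl k with h | h <;> rw [h] <;> ring_nf <;> nlinarith
      nlinarith [sub_nonneg.mpr hδ1.le]
    calc (S.card : ℝ) * (1 - δ) ^ 2 = ∑ _k ∈ S, (1 - δ) ^ 2 := by
          rw [Finset.sum_const, nsmul_eq_mul]
      _ ≤ ∑ k ∈ S, (∑ i, a k i * x i) ^ 2 := Finset.sum_le_sum hterm
      _ ≤ ∑ k, (∑ i, a k i * x i) ^ 2 :=
          Finset.sum_le_sum_of_subset_of_nonneg (Finset.subset_univ S)
            (fun k _ _ => sq_nonneg _)
      _ ≤ C * ∑ i, (x i) ^ 2 := hiso x
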